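/- arXiv:2506.14413 — 13 statements merged into one kernel-verified Lean document; each statement's English description precedes it below -/
import Mathlib

section
/- Let R be a profile of reaction functions for a finite game such that the associated dependency graph is acyclic (there is an edge from i to j whenever player i's reaction function R_i is not constant in player j's action). Then R has exactly one fixed point, i.e., there is exactly one action profile a with R_i(a_{-i}) = a_i for every player i. -/
/-- A reaction function for player `i` must not depend on `i`'s own coordinate:
it is a function of the actions `a_{-i}` of the other players. -/
def IndepOf {ι : Type*} {A : ι → Type*} (i : ι) (f : (∀ j, A j) → A i) : Prop :=
  ∀ a b : ∀ j, A j, (∀ j, j ≠ i → a j = b j) → f a = f b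

/-- The set of fixed points (executable outcomes) of a profile of reaction functions. -/
def FixedPts {ι : Type*} {A : ι → Type*} (R : ∀ i, (∀ j, A j) → A i) : Set (∀ j, A j) :=
  {a | ∀ i, R i a = a i}

/-- Extended payoff of a reaction-function profile: the supremum (= maximum, in a
finite game) of `u i` over the fixed points, and `⊥ = -∞` when there is none. -/
noncomputable def Upay {ι : Type*} {A : ι → Type*}
    (u : ∀ i : ι, (∀ j, A j) → ℝ) (R : ∀ i, (∀ j, A j) → A i) (i : ι) : EReal :=
  sSup ((fun a => ((u i a : ℝ) : EReal)) '' FixedPts R)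

/-- A profile is unambiguous if some fixed point weakly Pareto-dominates all fixed points. -/
def Unambiguous {ι : Type*} {A : ι → Type*}
    (u : ∀ i : ι, (∀ j, A j) → ℝ) (R : ∀ i, (∀ j, A j) → A i) : Prop :=
  ∃ a ∈ FixedPts R, ∀ a' ∈ FixedPts R, ∀ i, u i a' ≤ u i a

/-- Reaction-function equilibrium: an unambiguous profile with no profitable
unilateral deviation through any reaction function. -/
def IsRFE {ι : Type*} [DecidableEq ι] {A : ι → Type*}
    (u : ∀ i : ι, (∀ j, A j) → ℝ) (R : ∀ i, (∀ j, A j) → A i) : Prop :=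
  Unambiguous u R ∧
    ∀ (i : ι) (R' : (∀ j, A j) → A i), IndepOf i R' →
      Upay u (Function.update R i R') i ≤ Upay u R i

/-- Outcome `a` is supported in reaction-function equilibrium. -/
def SupportedOutcome {ι : Type*} [DecidableEq ι] {A : ι → Type*}
    (u : ∀ i : ι, (∀ j, A j) → ℝ) (a : ∀ j, A j) : Prop :=
  ∃ R : ∀ i, (∀ j, A j) → A i, (∀ i, IndepOf i (R i)) ∧ IsRFE u R ∧
    a ∈ FixedPts R ∧ ∀ a' ∈ FixedPts R, ∀ i, u i a' ≤ u i a

/-- Player `i`'s maxmin payoff. -/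
noncomputable def maxmin {ι : Type*} [DecidableEq ι] {A : ι → Type*}
    [∀ j, Fintype (A j)] [∀ j, Nonempty (A j)]
    (u : ∀ i : ι, (∀ j, A j) → ℝ) (i : ι) : ℝ :=
  ⨆ x : A i, ⨅ a : ∀ j, A j, u i (Function.update a i x)

/-- A reaction function is safe if it guarantees at least the maxmin payoff. -/
def SafeRF {ι : Type*} [DecidableEq ι] {A : ι → Type*}
    [∀ j, Fintype (A j)] [∀ j, Nonempty (A j)]
    (u : ∀ i : ι, (∀ j, A j) → ℝ) (i : ι) (r : (∀ j, A j) → A i) : Prop :=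
  ∀ a : ∀ j, A j, maxmin u i ≤ u i (Function.update a i (r a))

/-- if the dependency graph of a reaction-function profile is acyclic,
then the profile has exactly one fixed point. -/
theorem stmt0 {ι : Type*} [Fintype ι] [DecidableEq ι] {A : ι → Type*}
    [∀ j, Fintype (A j)] [∀ j, Nonempty (A j)]
    (R : ∀ i, (∀ j, A j) → A i) (hind : ∀ i, IndepOf i (R i))
    (hacyc : ∀ i : ι, ¬ Relation.TransGen
      (fun i j : ι => i ≠ j ∧ ∃ a b : ∀ k, A k,
        (∀ k, k ≠ j → a k = b k) ∧ R i a ≠ R i b) i i) :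
    ∃! a : ∀ j, A j, ∀ i, R i a = a i := by

  classical
  set E : ι → ι → Prop := fun i j => i ≠ j ∧ ∃ a b : ∀ k, A k,
      (∀ k, k ≠ j → a k = b k) ∧ R i a ≠ R i b with hE
  -- key: R i depends only on coordinates j with E i j
  have key : ∀ (i : ι) (a b : ∀ j, A j), (∀ j, E i j → a j = b j) → R i a = R i b := by
    intro i
    have main : ∀ s : Finset ι, ∀ a b : ∀ j, A j,
        (∀ j, E i j → a j = b j) → (∀ j, j ∉ s → a j = b j) → R i a = R i b := by
      intro s
      induction s using Finset.induction_on with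
      | empty =>
          intro a b _ h
          have : a = b := funext fun j => h j (Finset.notMem_empty j)
          rw [this]
      | @insert j s' hj ih =>
          intro a b hEab hout
          set b' := Function.update b j (a j) with hb'
          have h1 : R i a = R i b' := by
            apply ih
            · intro k hk
              by_cases hkj : k = j
              · subst hkj; simp [hb']
              · rw [hb', Function.update_of_ne hkj]; exact hEab k hk
            · intro k hk
              by_cases hkj : k = j
              · subst hkj; simp [hb']
              · rw [hb', Function.update_of_ne hkj]
                exact hout k (by simp [hkj, hk])
          have h2 : R i b' = R i b := by
            by_cases heq : a j = b j
            · have : b' = b := by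
                funext k
                by_cases hkj : k = j
                · subst hkj; simp [hb', heq]
                · rw [hb', Function.update_of_ne hkj]
              rw [this]
            · by_cases hij : j = i
              · exact hind i b' b (fun k hk => by
                  rw [hb', Function.update_of_ne (fun h => hk (h.trans hij))])
              · by_cases hEij : E i j
                · exact absurd (hEab j hEij) heq
                · by_contra hne
                  exact hEij ⟨fun h => hij h.symm,
                    b', b, fun k hk => by rw [hb', Function.update_of_ne hk], hne⟩
          rw [h1, h2]
    intro a b h
    exact main Finset.univ a b h (fun j hj => absurd (Finset.mem_univ j) hj)
  -- well-foundedness of the reversed dependency relation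
  have wfT : WellFounded (Relation.TransGen (flip E)) := by
    have hirr : IsIrrefl ι (Relation.TransGen (flip E)) := by
      constructor
      intro i h
      exact hacyc i (by
        rw [← Relation.transGen_swap] at h
        exact h)
    have htr : IsTrans ι (Relation.TransGen (flip E)) := ⟨fun _ _ _ => Relation.TransGen.trans⟩
    exact Finite.wellFounded_of_trans_of_irrefl _
  have wf : WellFounded (flip E) := Subrelation.wf (fun h => Relation.TransGen.single h) wfT
  -- construct the fixed point by well-founded recursion
  let g : ∀ i, A i := wf.fix (fun i ih =>
    R i (fun j => if h : flip E j i then ih j h else Classical.arbitrary (A j)))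
  have hgfix : ∀ i, g i =
      R i (fun j => if h : flip E j i then g j else Classical.arbitrary (A j)) := by
    intro i
    exact wf.fix_eq _ i
  have hfp : ∀ i, R i g = g i := by
    intro i
    rw [hgfix i]
    apply key
    intro j hj
    rw [dif_pos (show flip E j i from hj)]
  refine ⟨g, hfp, ?_⟩
  intro a ha
  funext i
  induction i using wf.induction with
  | _ i ih =>
    calc a i = R i a := (ha i).symm
      _ = R i g := key i a g fun j hj => ih j hj
      _ = g i := hfp i
end

section
/- Every reaction-function game has a reaction-function equilibrium. Concretely: order the players 1,…,n; any backward-induction (subgame-perfect) strategy profile of the corresponding perfect-information sequential-move game, translated into reaction functions (player i's reaction depends only on the actions of players 1,…,i−1), is an unambiguous profile from which no player can profitably deviate by any other reaction function. -/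
set_option linter.unusedSectionVars false
set_option linter.unusedVariables false

section BI
variable {ι : Type*} [Fintype ι] [LinearOrder ι] {A : ι → Type*}
  [∀ j, Fintype (A j)] [∀ j, Nonempty (A j)]
  (u : ∀ i : ι, (∀ j, A j) → ℝ)

noncomputable def po : Finset ι → (∀ j, A j) → (∀ j, A j)
  | s, a =>
    if h : s.Nonempty then
      have : (s.erase (s.min' h)).card < s.card :=
        Finset.card_erase_lt_of_mem (s.min'_mem h)
      po (s.erase (s.min' h)) (Function.update a (s.min' h)
        (Classical.choose (Finite.exists_max fun x : A (s.min' h) =>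
          u (s.min' h) (po (s.erase (s.min' h)) (Function.update a (s.min' h) x)))))
    else a
  termination_by s _ => s.card

noncomputable def bx (s : Finset ι) (h : s.Nonempty) (a : ∀ j, A j) : A (s.min' h) :=
  Classical.choose (Finite.exists_max fun x : A (s.min' h) =>
    u (s.min' h) (po u (s.erase (s.min' h)) (Function.update a (s.min' h) x)))

lemma po_eq (s : Finset ι) (h : s.Nonempty) (a : ∀ j, A j) :
    po u s a = po u (s.erase (s.min' h)) (Function.update a (s.min' h) (bx u s h a)) := by
  rw [po]
  simp [h, bx]

lemma bx_spec (s : Finset ι) (h : s.Nonempty) (a : ∀ j, A j) (y : A (s.min' h)) :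
    u (s.min' h) (po u (s.erase (s.min' h)) (Function.update a (s.min' h) y)) ≤
    u (s.min' h) (po u (s.erase (s.min' h)) (Function.update a (s.min' h) (bx u s h a))) :=
  Classical.choose_spec (Finite.exists_max fun x : A (s.min' h) =>
    u (s.min' h) (po u (s.erase (s.min' h)) (Function.update a (s.min' h) x))) y

lemma po_empty (a : ∀ j, A j) : po u (∅ : Finset ι) a = a := by
  rw [po]; simp

lemma po_notMem : ∀ (s : Finset ι) (a : ∀ j, A j) (j : ι), j ∉ s → po u s a j = a j := by
  intro s
  induction s using Finset.strongInduction with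
  | _ s ih =>
    intro a j hj
    rcases s.eq_empty_or_nonempty with rfl | h
    · rw [po_empty]
    · rw [po_eq u s h a,
        ih _ (Finset.erase_ssubset (s.min'_mem h)) _ _ (fun hm => hj (Finset.mem_of_mem_erase hm))]
      exact Function.update_of_ne (fun hx => hj (by rw [hx]; exact s.min'_mem h)) _ _

lemma po_congr : ∀ (s : Finset ι) (a b : ∀ j, A j), (∀ j, j ∉ s → a j = b j) →
    po u s a = po u s b := by
  intro s
  induction s using Finset.strongInduction with
  | _ s ih =>
    intro a b hab
    rcases s.eq_empty_or_nonempty with rfl | h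
    · rw [po_empty, po_empty]; exact funext fun j => hab j (by simp)
    · set i := s.min' h with hi
      have key : ∀ x : A i, po u (s.erase i) (Function.update a i x)
          = po u (s.erase i) (Function.update b i x) := by
        intro x
        refine ih _ (Finset.erase_ssubset (s.min'_mem h)) _ _ ?_
        intro j hj
        rcases eq_or_ne j i with rfl | hne
        · simp
        · rw [Function.update_of_ne hne, Function.update_of_ne hne]
          exact hab j (fun hjs => hj (Finset.mem_erase.mpr ⟨hne, hjs⟩))
      have hbx : bx u s h a = bx u s h b := by
        unfold bx
        congr 1
        have key' : ∀ x : A (s.min' h), po u (s.erase i) (Function.update a (s.min' h) x)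
            = po u (s.erase i) (Function.update b (s.min' h) x) := key
        simp only [← hi, key']
      rw [po_eq u s h a, po_eq u s h b, hbx, key]

/-- The set of players `≥ i`. -/
def Sgee (i : ι) : Finset ι := Finset.univ.filter (i ≤ ·)

lemma mem_Sgee {i j : ι} : j ∈ Sgee i ↔ i ≤ j := by simp [Sgee]

lemma Sgee_nonempty (i : ι) : (Sgee i).Nonempty := ⟨i, mem_Sgee.mpr le_rfl⟩

lemma min'_Sgee (i : ι) : (Sgee i).min' (Sgee_nonempty i) = i :=
  le_antisymm (Finset.min'_le _ _ (mem_Sgee.mpr le_rfl))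
    (Finset.le_min' _ _ _ fun j hj => mem_Sgee.mp hj)

lemma erase_Sgee_eq {i : ι} (h : ((Sgee i).erase i).Nonempty) :
    (Sgee i).erase i = Sgee (((Sgee i).erase i).min' h) := by
  set m := ((Sgee i).erase i).min' h with hm
  have him : i < m := by
    have := ((Sgee i).erase i).min'_mem h
    rw [Finset.mem_erase, mem_Sgee] at this
    exact lt_of_le_of_ne this.2 (Ne.symm this.1)
  ext j
  rw [Finset.mem_erase, mem_Sgee, mem_Sgee]
  constructor
  · intro hj
    exact Finset.min'_le _ _ (by rw [Finset.mem_erase, mem_Sgee]; exact hj)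
  · intro hj
    exact ⟨(him.trans_le hj).ne', (him.trans_le hj).le⟩

lemma exists_bx (i : ι) (a : ∀ j, A j) : ∃ x : A i,
    po u (Sgee i) a = po u ((Sgee i).erase i) (Function.update a i x) ∧
    ∀ y : A i, u i (po u ((Sgee i).erase i) (Function.update a i y)) ≤
      u i (po u ((Sgee i).erase i) (Function.update a i x)) := by
  have h := Sgee_nonempty i
  have hm : (Sgee i).min' h = i := min'_Sgee i
  have H : ∃ x : A ((Sgee i).min' h),
      po u (Sgee i) a = po u ((Sgee i).erase ((Sgee i).min' h))
        (Function.update a ((Sgee i).min' h) x) ∧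
      ∀ y : A ((Sgee i).min' h),
        u ((Sgee i).min' h) (po u ((Sgee i).erase ((Sgee i).min' h))
          (Function.update a ((Sgee i).min' h) y)) ≤
        u ((Sgee i).min' h) (po u ((Sgee i).erase ((Sgee i).min' h))
          (Function.update a ((Sgee i).min' h) x)) :=
    ⟨bx u (Sgee i) h a, po_eq u (Sgee i) h a, bx_spec u (Sgee i) h a⟩
  rw [hm] at H
  exact H

/-- Backward-induction reaction function. -/
noncomputable def RR (i : ι) (a : ∀ j, A j) : A i := po u (Sgee i) a i

lemma RR_eq_bx (i : ι) (a : ∀ j, A j) :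
    ∃ x : A i, RR u i a = x ∧
      po u (Sgee i) a = po u ((Sgee i).erase i) (Function.update a i x) ∧
      ∀ y : A i, u i (po u ((Sgee i).erase i) (Function.update a i y)) ≤
        u i (po u ((Sgee i).erase i) (Function.update a i x)) := by
  obtain ⟨x, hx1, hx2⟩ := exists_bx u i a
  refine ⟨x, ?_, hx1, hx2⟩
  rw [RR, hx1, po_notMem u _ _ i (Finset.notMem_erase i _), Function.update_self]

/-- Agreement below `i` implies same reaction. -/
lemma RR_congr (i : ι) (a b : ∀ j, A j) (hab : ∀ j, j < i → a j = b j) :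
    RR u i a = RR u i b := by
  rw [RR, RR, po_congr u (Sgee i) a b]
  intro j hj
  exact hab j (lt_of_not_ge (fun hle => hj (mem_Sgee.mpr hle)))

/-- Path consistency: the continuation play from `i` follows `RR` at every player `≥ i`. -/
lemma consistent : ∀ (n : ℕ) (i : ι), (Sgee i).card ≤ n → ∀ (a : ∀ j, A j) (j : ι), i ≤ j →
    RR u j (po u (Sgee i) a) = po u (Sgee i) a j := by
  intro n
  induction n with
  | zero => intro i hi; exact absurd (Finset.card_pos.mpr (Sgee_nonempty i)) (by omega)
  | succ n ih =>
    intro i hi a j hij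
    obtain ⟨x, hRx, hx1, hx2⟩ := RR_eq_bx u i a
    rcases eq_or_lt_of_le hij with rfl | hlt
    · have hout : ∀ k, k ∉ Sgee i → po u (Sgee i) a k = a k := fun k hk =>
        po_notMem u _ _ _ hk
      rw [RR, po_congr u (Sgee i) _ a hout]
    · have hjT : j ∈ (Sgee i).erase i := Finset.mem_erase.mpr ⟨hlt.ne', mem_Sgee.mpr hlt.le⟩
      have hT : ((Sgee i).erase i).Nonempty := ⟨j, hjT⟩
      have hTS := erase_Sgee_eq hT
      set m := ((Sgee i).erase i).min' hT with hm
      have hcard : (Sgee m).card ≤ n := by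
        have h1 : ((Sgee i).erase i).card < (Sgee i).card :=
          Finset.card_erase_lt_of_mem (mem_Sgee.mpr le_rfl)
        rw [← hTS]; omega
      have hmj : m ≤ j := Finset.min'_le _ _ hjT
      rw [hx1, hTS]
      exact ih m hcard (Function.update a i x) j hmj

/-- Absorption: if `b` already follows `RR` from `i` on, the continuation play fixes it. -/
lemma absorb : ∀ (n : ℕ) (i : ι), (Sgee i).card ≤ n → ∀ b : ∀ j, A j,
    (∀ j, i ≤ j → RR u j b = b j) → po u (Sgee i) b = b := by
  intro n
  induction n with
  | zero => intro i hi; exact absurd (Finset.card_pos.mpr (Sgee_nonempty i)) (by omega)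
  | succ n ih =>
    intro i hi b hb
    obtain ⟨x, hRx, hx1, hx2⟩ := RR_eq_bx u i b
    have hxb : x = b i := by rw [← hRx]; exact hb i le_rfl
    rw [hx1, hxb, Function.update_eq_self]
    rcases ((Sgee i).erase i).eq_empty_or_nonempty with he | hT
    · rw [he, po_empty]
    · have hTS := erase_Sgee_eq hT
      set m := ((Sgee i).erase i).min' hT with hm
      have him : i < m := by
        have := ((Sgee i).erase i).min'_mem hT
        rw [Finset.mem_erase, mem_Sgee] at this
        exact lt_of_le_of_ne this.2 (Ne.symm this.1)
      have hcard : (Sgee m).card ≤ n := by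
        have h1 : ((Sgee i).erase i).card < (Sgee i).card :=
          Finset.card_erase_lt_of_mem (mem_Sgee.mpr le_rfl)
        rw [← hTS]; omega
      rw [hTS]
      exact ih m hcard b (fun j hj => hb j (him.le.trans hj))

end BI

/-- every reaction-function game has a reaction-function equilibrium;
moreover one can be chosen as in the sequential-move (backward-induction) game,
where (ordering the players linearly) each player's reaction depends only on the
actions of the players preceding them. -/
theorem stmt2 {ι : Type*} [Fintype ι] [LinearOrder ι] {A : ι → Type*}
    [∀ j, Fintype (A j)] [∀ j, Nonempty (A j)]
    (u : ∀ i : ι, (∀ j, A j) → ℝ) :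
    ∃ R : ∀ i, (∀ j, A j) → A i,
      (∀ i, IndepOf i (R i)) ∧
      (∀ i, ∀ a b : ∀ j, A j, (∀ j, j < i → a j = b j) → R i a = R i b) ∧
      IsRFE u R := by
  classical
  have c : ∀ j, A j := fun j => Classical.arbitrary (A j)
  set astar : ∀ j, A j := po u Finset.univ c with hastar
  have hfix : ∀ j, RR u j astar = astar j := by
    intro j
    have hne : (Finset.univ : Finset ι).Nonempty := ⟨j, Finset.mem_univ j⟩
    have huniv : (Finset.univ : Finset ι) = Sgee (Finset.univ.min' hne) := by
      ext k
      exact ⟨fun _ => mem_Sgee.mpr (Finset.min'_le _ _ (Finset.mem_univ k)),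
        fun _ => Finset.mem_univ k⟩
    have h := consistent u (Sgee (Finset.univ.min' hne)).card (Finset.univ.min' hne)
      le_rfl c j (Finset.min'_le _ _ (Finset.mem_univ j))
    rw [← huniv] at h
    rw [hastar]
    exact h
  have hSabs : ∀ i, po u (Sgee i) astar = astar := fun i =>
    absorb u (Sgee i).card i le_rfl astar (fun j _ => hfix j)
  have below_eq : ∀ j : ι, ∀ a : ∀ k, A k, (∀ k, k ≤ j → RR u k a = a k) → a j = astar j := by
    intro j
    induction j using WellFoundedLT.induction with
    | ind j ih =>
      intro a ha
      have h1 : a j = RR u j a := (ha j le_rfl).symm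
      have h2 : RR u j a = RR u j astar :=
        RR_congr u j a astar (fun k hk => ih k hk a (fun k' hk' => ha k' (hk'.trans hk.le)))
      rw [h1, h2, hfix j]
  refine ⟨fun i => RR u i, ?_, ?_, ?_⟩
  · intro i a b hab
    exact RR_congr u i a b (fun j hj => hab j hj.ne)
  · intro i a b hab
    exact RR_congr u i a b hab
  · have hFP : FixedPts (fun i => RR u i) = {astar} := by
      ext a
      simp only [FixedPts, Set.mem_setOf_eq, Set.mem_singleton_iff]
      constructor
      · intro ha
        exact funext fun j => below_eq j a (fun k _ => ha k)
      · rintro rfl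
        exact hfix
    constructor
    · refine ⟨astar, by rw [hFP]; exact rfl, ?_⟩
      intro a' ha' i
      rw [hFP] at ha'
      rw [ha']
    · intro i R' hR'
      have hU : Upay u (fun i => RR u i) i = ((u i astar : ℝ) : EReal) := by
        rw [Upay, hFP, Set.image_singleton, sSup_singleton]
      rw [hU, Upay]
      apply sSup_le
      rintro x ⟨a, ha, rfl⟩
      rw [EReal.coe_le_coe_iff]
      have hja : ∀ j, j ≠ i → RR u j a = a j := by
        intro j hj
        have h := ha j
        rwa [Function.update_of_ne hj] at h
      have hlow : ∀ j, j < i → a j = astar j := fun j hj =>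
        below_eq j a (fun k hk => hja k (ne_of_lt (lt_of_le_of_lt hk hj)))
      have habs : po u ((Sgee i).erase i) a = a := by
        rcases ((Sgee i).erase i).eq_empty_or_nonempty with he | hT
        · rw [he, po_empty]
        · have hTS := erase_Sgee_eq hT
          have him : i < ((Sgee i).erase i).min' hT := by
            have hmm := ((Sgee i).erase i).min'_mem hT
            rw [Finset.mem_erase, mem_Sgee] at hmm
            exact lt_of_le_of_ne hmm.2 (Ne.symm hmm.1)
          rw [hTS]
          exact absorb u _ _ le_rfl a (fun j hj => hja j (him.trans_le hj).ne')
      obtain ⟨x, hRx, hx1, hx2⟩ := RR_eq_bx u i a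
      calc u i a = u i (po u ((Sgee i).erase i) (Function.update a i (a i))) := by
            rw [Function.update_eq_self, habs]
        _ ≤ u i (po u ((Sgee i).erase i) (Function.update a i x)) := hx2 (a i)
        _ = u i (po u (Sgee i) a) := by rw [← hx1]
        _ = u i (po u (Sgee i) astar) := by
            rw [po_congr u (Sgee i) a astar
              (fun j hj => hlow j (lt_of_not_ge (fun hle => hj (mem_Sgee.mpr hle))))]
        _ = u i astar := by rw [hSabs i]
end

section
/- In a two-player reaction-function game, an outcome a ∈ A is supported in reaction-function equilibrium if and only if u_i(a) ≥ v̲_i for both players i, where v̲_i = max_{a_i} min_{a_{-i}} u_i(a_i, a_{-i}) is player i's maxmin payoff. -/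
section Aux

variable {ι : Type*} [Fintype ι] [DecidableEq ι] {A : ι → Type*}
  [∀ j, Fintype (A j)] [∀ j, Nonempty (A j)]

/-- In a two-element type, every `i` has a unique "other" element. -/
lemma exists_other (hcard : Fintype.card ι = 2) (i : ι) :
    ∃ j, j ≠ i ∧ ∀ k, k = i ∨ k = j := by
  have h1 : (Finset.univ.erase i).card = 1 := by
    rw [Finset.card_erase_of_mem (Finset.mem_univ i), Finset.card_univ, hcard]
  obtain ⟨j, hj⟩ := Finset.card_eq_one.mp h1
  refine ⟨j, ?_, ?_⟩
  · have : j ∈ Finset.univ.erase i := hj ▸ Finset.mem_singleton_self j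
    exact Finset.ne_of_mem_erase this
  · intro k
    by_cases hk : k = i
    · exact Or.inl hk
    · right
      have : k ∈ Finset.univ.erase i := Finset.mem_erase.mpr ⟨hk, Finset.mem_univ k⟩
      rw [hj] at this
      exact Finset.mem_singleton.mp this

lemma updEq (i : ι) {b c : ∀ j, A j} (h : ∀ k, k ≠ i → b k = c k) (x : A i) :
    Function.update b i x = Function.update c i x := by
  funext k
  rcases eq_or_ne k i with rfl | hk
  · simp
  · rw [Function.update_of_ne hk, Function.update_of_ne hk, h k hk]

/-- Punishment action of player `i` against the payoff of player `j`. -/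
noncomputable def pun (u : ∀ i : ι, (∀ j, A j) → ℝ) (j i : ι) (b : ∀ k, A k) : A i :=
  (Finite.exists_min (fun x : A i => u j (Function.update b i x))).choose

lemma pun_spec (u : ∀ i : ι, (∀ j, A j) → ℝ) (j i : ι) (b : ∀ k, A k) (x : A i) :
    u j (Function.update b i (pun u j i b)) ≤ u j (Function.update b i x) :=
  (Finite.exists_min (fun x : A i => u j (Function.update b i x))).choose_spec x

lemma pun_congr (u : ∀ i : ι, (∀ j, A j) → ℝ) (j i : ι) {b c : ∀ k, A k}
    (h : ∀ k, k ≠ i → b k = c k) : pun u j i b = pun u j i c := by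
  have hf : (fun x : A i => u j (Function.update b i x))
      = (fun x : A i => u j (Function.update c i x)) := by
    funext x; rw [updEq i h]
  exact congrArg (fun f : A i → ℝ => (Finite.exists_min f).choose) hf

/-- If a player ends up held to his pointwise-minimized payoff, he gets at most maxmin. -/
lemma punish_bound (u : ∀ i : ι, (∀ j, A j) → ℝ) {i p : ι} (hip : i ≠ p)
    (hdi : ∀ k, k = i ∨ k = p) (b : ∀ j, A j)
    (hbp : ∀ x : A p, u i (Function.update b p (b p)) ≤ u i (Function.update b p x)) :
    u i b ≤ maxmin u i := by
  obtain ⟨c, hc⟩ := exists_eq_ciInf_of_finite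
    (f := fun c : ∀ j, A j => u i (Function.update c i (b i)))
  have h1 : Function.update b p (c p) = Function.update c i (b i) := by
    funext k
    rcases hdi k with rfl | rfl
    · rw [Function.update_of_ne hip, Function.update_self]
    · rw [Function.update_self, Function.update_of_ne (Ne.symm hip)]
  have h2 : u i b ≤ u i (Function.update c i (b i)) := by
    rw [← h1]
    have := hbp (c p)
    rwa [Function.update_eq_self] at this
  have h3 : (⨅ d : ∀ j, A j, u i (Function.update d i (b i))) ≤ maxmin u i := by
    unfold maxmin
    exact le_ciSup (f := fun x : A i => ⨅ d : ∀ j, A j, u i (Function.update d i x))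
      (Finite.bddAbove_range _) (b i)
  calc u i b ≤ u i (Function.update c i (b i)) := h2
    _ = ⨅ d : ∀ j, A j, u i (Function.update d i (b i)) := hc
    _ ≤ maxmin u i := h3

lemma Upay_le_of {u : ∀ i : ι, (∀ j, A j) → ℝ} {R : ∀ i, (∀ j, A j) → A i} {i : ι} {c : ℝ}
    (h : ∀ b ∈ FixedPts R, u i b ≤ c) : Upay u R i ≤ (c : EReal) := by
  apply sSup_le
  rintro _ ⟨b, hb, rfl⟩
  show ((u i b : ℝ) : EReal) ≤ (c : EReal)
  exact_mod_cast h b hb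

lemma Upay_eq_of {u : ∀ i : ι, (∀ j, A j) → ℝ} {R : ∀ i, (∀ j, A j) → A i} {i : ι}
    {a : ∀ j, A j} (ha : a ∈ FixedPts R) (h : ∀ b ∈ FixedPts R, u i b ≤ u i a) :
    Upay u R i = ((u i a : ℝ) : EReal) :=
  le_antisymm (Upay_le_of h) (le_sSup ⟨a, ha, rfl⟩)

end Aux

/-- in a two-player game, an outcome is supported in
reaction-function equilibrium iff it gives every player at least the maxmin payoff. -/
theorem stmt3 {ι : Type*} [Fintype ι] [DecidableEq ι] {A : ι → Type*}
    [∀ j, Fintype (A j)] [∀ j, Nonempty (A j)]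
    (hcard : Fintype.card ι = 2)
    (u : ∀ i : ι, (∀ j, A j) → ℝ) (a : ∀ j, A j) :
    SupportedOutcome u a ↔ ∀ i, maxmin u i ≤ u i a := by
  classical
  constructor
  · rintro ⟨R, hind, ⟨_, hdev⟩, haF, hadom⟩ i
    obtain ⟨j, hji, hjk⟩ := exists_other hcard i
    -- choose a maxmin action x*
    obtain ⟨x, hx⟩ := exists_eq_ciSup_of_finite
      (f := fun x : A i => ⨅ c : ∀ j, A j, u i (Function.update c i x))
    -- deviate to the constant reaction function x*
    set R' : (∀ j, A j) → A i := fun _ => x with hR'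
    have hR'ind : IndepOf i R' := fun _ _ _ => rfl
    -- construct the resulting fixed point b
    set y : A j := R j (Function.update a i x) with hy
    set b : ∀ k, A k := Function.update (Function.update a j y) i x with hb
    have hbi : b i = x := by simp [hb]
    have hbj : b j = y := by
      rw [hb, Function.update_of_ne hji, Function.update_self]
    have hbfix : b ∈ FixedPts (Function.update R i R') := by
      intro k
      rcases hjk k with rfl | rfl
      · rw [Function.update_self]; exact hbi.symm
      · rw [Function.update_of_ne hji]
        have : R k b = R k (Function.update a i x) := by
          apply hind k
          intro m hm
          rcases hjk m with rfl | rfl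
          · simp [hb]
          · exact absurd rfl hm
        rw [this, ← hy, hbj]
    -- payoff bound at b
    have hub : maxmin u i ≤ u i b := by
      have h1 : (⨅ c : ∀ j, A j, u i (Function.update c i x)) ≤ u i (Function.update b i x) :=
        ciInf_le (Finite.bddBelow_range _) b
      have h2 : Function.update b i x = b := by
        rw [← hbi]; exact Function.update_eq_self i b
      rw [h2] at h1
      calc maxmin u i = ⨅ c : ∀ j, A j, u i (Function.update c i x) := by
            unfold maxmin; exact hx.symm
        _ ≤ u i b := h1
    -- equilibrium condition
    have hUa : Upay u R i = ((u i a : ℝ) : EReal) :=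
      Upay_eq_of haF (fun b hbF => hadom b hbF i)
    have hchain : ((u i b : ℝ) : EReal) ≤ ((u i a : ℝ) : EReal) := by
      calc ((u i b : ℝ) : EReal) ≤ Upay u (Function.update R i R') i :=
            le_sSup ⟨b, hbfix, rfl⟩
        _ ≤ Upay u R i := hdev i R' hR'ind
        _ = ((u i a : ℝ) : EReal) := hUa
    exact le_trans hub (EReal.coe_le_coe_iff.mp hchain)
  · intro h
    -- pick the "other player" function
    have hoth : ∀ i : ι, ∃ j, j ≠ i ∧ ∀ k, k = i ∨ k = j := exists_other hcard
    choose oth hoth1 hoth2 using hoth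
    have hoth_oth : ∀ i, oth (oth i) = i := by
      intro i
      rcases hoth2 (oth i) i with hk | hk
      · exact absurd hk.symm (hoth1 i)
      · exact hk.symm
    -- grim-trigger profile: conform to a, else punish the other player pointwise
    set R : ∀ i, (∀ j, A j) → A i :=
      fun i b => if ∀ k, k ≠ i → b k = a k then a i else pun u (oth i) i b with hR
    have hind : ∀ i, IndepOf i (R i) := by
      intro i b c hbc
      have hcond : (∀ k, k ≠ i → b k = a k) ↔ (∀ k, k ≠ i → c k = a k) := by
        constructor <;> intro hh k hk
        · rw [← hbc k hk]; exact hh k hk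
        · rw [hbc k hk]; exact hh k hk
      simp only [hR]
      by_cases hcb : ∀ k, k ≠ i → b k = a k
      · rw [if_pos hcb, if_pos (hcond.mp hcb)]
      · rw [if_neg hcb, if_neg (fun hcc => hcb (hcond.mpr hcc)), pun_congr u (oth i) i hbc]
    have haF : a ∈ FixedPts R := by
      intro i
      show (if ∀ k, k ≠ i → a k = a k then a i else pun u (oth i) i a) = a i
      rw [if_pos (fun k _ => rfl)]
    -- every fixed point of R is dominated by a
    have hdom : ∀ b ∈ FixedPts R, ∀ i, u i b ≤ u i a := by
      intro b hbF i
      by_cases hba : b = a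
      · rw [hba]
      -- b ≠ a : show b p = punishment of i, where p = oth i
      · set p := oth i with hp
        have hpi : i ≠ p := Ne.symm (hoth1 i)
        have hop : oth p = i := by rw [hp, hoth_oth]
        have hcp : ¬ (∀ k, k ≠ p → b k = a k) := by
          intro hc
          apply hba
          have hbp : b p = a p := by
            have hh := hbF p
            simp only [hR] at hh
            rw [if_pos hc] at hh
            exact hh.symm
          funext k
          rcases hoth2 p k with rfl | rfl
          · exact hbp
          · exact hc _ (hoth1 p)
        have hbp : b p = pun u i p b := by
          have := hbF p
          simp only [hR] at this
          rw [if_neg hcp, hop] at this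
          exact this.symm
        have hmin : ∀ x : A p, u i (Function.update b p (b p)) ≤ u i (Function.update b p x) := by
          intro x
          rw [hbp]
          exact pun_spec u i p b x
        have hdi : ∀ k, k = i ∨ k = p := by
          intro k
          rcases hoth2 i k with hk | hk
          · exact Or.inl hk
          · exact Or.inr hk
        exact le_trans (punish_bound u hpi hdi b hmin) (h i)
    refine ⟨R, hind, ⟨⟨a, haF, hdom⟩, ?_⟩, haF, hdom⟩
    -- no profitable deviation
    intro i R' hR'
    have hUa : Upay u R i = ((u i a : ℝ) : EReal) :=
      Upay_eq_of haF (fun b hbF => hdom b hbF i)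
    rw [hUa]
    apply Upay_le_of
    intro b hbF
    set p := oth i with hp
    have hpi : i ≠ p := Ne.symm (hoth1 i)
    have hop : oth p = i := by rw [hp, hoth_oth]
    have hbp : R p b = b p := by
      have := hbF p
      rwa [Function.update_of_ne (Ne.symm hpi)] at this
    by_cases hcp : ∀ k, k ≠ p → b k = a k
    · -- b = a
      have hbpa : b p = a p := by
        simp only [hR] at hbp
        rw [if_pos hcp] at hbp
        exact hbp.symm
      have : b = a := by
        funext k
        rcases hoth2 p k with rfl | rfl
        · exact hbpa
        · exact hcp _ (hoth1 p)
      rw [this]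
    · have hbp2 : b p = pun u i p b := by
        simp only [hR] at hbp
        rw [if_neg hcp, hop] at hbp
        exact hbp.symm
      have hmin : ∀ x : A p, u i (Function.update b p (b p)) ≤ u i (Function.update b p x) := by
        intro x
        rw [hbp2]
        exact pun_spec u i p b x
      have hdi : ∀ k, k = i ∨ k = p := by
        intro k
        rcases hoth2 i k with hk | hk
        · exact Or.inl hk
        · exact Or.inr hk
      exact le_trans (punish_bound u hpi hdi b hmin) (h i)
end

section
/- In a reaction-function game, if a profile R is not a reaction-function equilibrium because some player i has a profitable deviation R'_i (i.e., U_i(R'_i, R_{-i}) > U_i(R)), then player i also has a profitable deviation through a constant reaction function. -/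
/-- if a player has a profitable deviation from a profile, then the
player also has a profitable deviation through a constant reaction function. -/
theorem stmt4 {ι : Type*} [Fintype ι] [DecidableEq ι] {A : ι → Type*}
    [∀ j, Fintype (A j)] [∀ j, Nonempty (A j)]
    (u : ∀ i : ι, (∀ j, A j) → ℝ)
    (R : ∀ i, (∀ j, A j) → A i) (hind : ∀ i, IndepOf i (R i))
    (i : ι) (R' : (∀ j, A j) → A i) (hR' : IndepOf i R')
    (hdev : Upay u R i < Upay u (Function.update R i R') i) :
    ∃ c : A i, Upay u R i < Upay u (Function.update R i (fun _ => c)) i := by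
  set S := (fun a => ((u i a : ℝ) : EReal)) '' FixedPts (Function.update R i R') with hS
  have hne : S.Nonempty := by
    by_contra h
    rw [Set.not_nonempty_iff_eq_empty] at h
    have : Upay u (Function.update R i R') i = ⊥ := by
      simp [Upay, ← hS, h]
    rw [this] at hdev
    exact absurd hdev (not_lt_bot)
  have hfin : S.Finite := (Set.toFinite _).image _
  have hmem : sSup S ∈ S := hne.csSup_mem hfin
  obtain ⟨a, ha, hua⟩ := hmem
  refine ⟨a i, ?_⟩
  have hafix : a ∈ FixedPts (Function.update R i (fun _ => a i)) := by
    intro j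
    by_cases hj : j = i
    · subst hj; simp [Function.update_self]
    · have := ha j
      simpa [Function.update_of_ne hj] using this
  have hle : ((u i a : ℝ) : EReal) ≤ Upay u (Function.update R i (fun _ => a i)) i :=
    le_sSup ⟨a, hafix, rfl⟩
  calc Upay u R i < Upay u (Function.update R i R') i := hdev
    _ = sSup S := rfl
    _ = ((u i a : ℝ) : EReal) := hua.symm
    _ ≤ _ := hle
end

section
/- Consider n ≥ 4 players, each with action set containing {0,1}, and define for each player i (indices mod n) the reaction function R_i(a_{-i}) = 1 if a_{i−1} = 0 and a_{i+1} ≠ 0, and R_i(a_{-i}) = 0 otherwise. Then for every action profile a ∈ {0,1}^n with a ≠ (0,…,0), at least two players i satisfy R_i(a_{-i}) ≠ a_i. Consequently, for every player i and every alternative reaction function R'_i, the fixed-point set of (R'_i, R_{-i}) is contained in {(0,…,0)}. -/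
lemma stmt5_key (n : ℕ) (a : ZMod (n + 4) → Fin 2) (j : ZMod (n + 4))
    (H : ∀ i, i ≠ j → a i = if a (i - 1) = 0 ∧ a (i + 1) ≠ 0 then 1 else 0) :
    a = fun _ => 0 := by
  have hcast : ∀ k : ℕ, 0 < k → k < n + 4 → ((k : ZMod (n + 4)) ≠ 0) := by
    intro k hk hk' h
    rw [ZMod.natCast_eq_zero_iff] at h
    exact absurd (Nat.le_of_dvd hk h) (by omega)
  have h1 : (1 : ZMod (n + 4)) ≠ 0 := by
    have := hcast 1 (by omega) (by omega); simpa using this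
  have h2 : (2 : ZMod (n + 4)) ≠ 0 := by
    have := hcast 2 (by omega) (by omega); simpa using this
  have h3 : (3 : ZMod (n + 4)) ≠ 0 := by
    have := hcast 3 (by omega) (by omega); simpa using this
  -- basic Fin 2 fact
  have fin2 : ∀ x : Fin 2, x ≠ 0 → x = 1 := by decide
  -- F1: a happy player playing 1 forces neighbors
  have hF1 : ∀ i, i ≠ j → a i ≠ 0 → a (i - 1) = 0 ∧ a (i + 1) ≠ 0 := by
    intro i hi hai
    by_cases hc : a (i - 1) = 0 ∧ a (i + 1) ≠ 0
    · exact hc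
    · have := H i hi; rw [if_neg hc] at this; exact absurd this hai
  -- Step 1: any player other than j, j+1, j+2 plays 0
  have step1 : ∀ i, i ≠ j → i ≠ j + 1 → i ≠ j + 2 → a i = 0 := by
    intro i hi hi1 hi2
    by_contra hai
    obtain ⟨hm1, _⟩ := hF1 i hi hai
    have hi1' : i - 1 ≠ j := fun h => hi1 (by linear_combination h)
    have hi2' : i - 2 ≠ j := fun h => hi2 (by linear_combination h)
    -- H at i - 1 : since a (i-1) = 0, condition must fail
    have hH := H (i - 1) hi1'
    rw [hm1] at hH
    have e1 : i - 1 + 1 = i := by ring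
    have e2 : i - 1 - 1 = i - 2 := by ring
    rw [e1, e2] at hH
    have hcond : a (i - 2) ≠ 0 := by
      intro h0
      rw [if_pos ⟨h0, hai⟩] at hH
      exact absurd hH.symm (by decide)
    obtain ⟨_, hne⟩ := hF1 (i - 2) hi2' hcond
    have e3 : i - 2 + 1 = i - 1 := by ring
    rw [e3] at hne
    exact hne hm1
  -- Step 2: a (j+2) = 0
  have step2 : a (j + 2) = 0 := by
    by_contra hai
    have hne : j + 2 ≠ j := fun h => h2 (by linear_combination h)
    obtain ⟨_, hne3⟩ := hF1 (j + 2) hne hai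
    have e : j + 2 + 1 = j + 3 := by ring
    rw [e] at hne3
    exact hne3 (step1 (j + 3) (fun h => h3 (by linear_combination h))
      (fun h => h2 (by linear_combination h)) (fun h => h1 (by linear_combination h)))
  -- Step 3: a (j+1) = 0
  have step3 : a (j + 1) = 0 := by
    by_contra hai
    have hne : j + 1 ≠ j := fun h => h1 (by linear_combination h)
    obtain ⟨_, hne2⟩ := hF1 (j + 1) hne hai
    have e : j + 1 + 1 = j + 2 := by ring
    rw [e] at hne2
    exact hne2 step2
  -- Step 4: all players other than j play 0
  have step4 : ∀ i, i ≠ j → a i = 0 := by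
    intro i hi
    by_cases hi1 : i = j + 1
    · rw [hi1]; exact step3
    by_cases hi2 : i = j + 2
    · rw [hi2]; exact step2
    exact step1 i hi hi1 hi2
  -- Step 5: a j = 0
  have step5 : a j = 0 := by
    by_contra haj
    have hne : j - 1 ≠ j := fun h => h1 (by linear_combination -h)
    have hH := H (j - 1) hne
    have hm : a (j - 1) = 0 := step4 (j - 1) hne
    have hm2 : a (j - 1 - 1) = 0 := by
      refine step4 (j - 1 - 1) (fun h => h2 (by linear_combination -h))
    have e : j - 1 + 1 = j := by ring
    rw [hm, e, if_pos ⟨hm2, haj⟩] at hH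
    exact absurd hH.symm (by decide)
  funext i
  by_cases hi : i = j
  · rw [hi]; exact step5
  · exact step4 i hi


/-- for `n ≥ 4` cyclically arranged players with the reaction
"play 1 iff my predecessor plays 0 and my successor plays nonzero", every
nonzero profile leaves at least two players unhappy; consequently any unilateral
deviation has fixed-point set contained in the all-zero outcome. -/
theorem stmt5 (n : ℕ)
    (R : ∀ _ : ZMod (n + 4), (ZMod (n + 4) → Fin 2) → Fin 2)
    (hR : ∀ i a, R i a = if a (i - 1) = 0 ∧ a (i + 1) ≠ 0 then 1 else 0) :
    (∀ a : ZMod (n + 4) → Fin 2, a ≠ (fun _ => 0) →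
      2 ≤ (Finset.univ.filter fun i => R i a ≠ a i).card) ∧
    ∀ (i : ZMod (n + 4)) (R' : (ZMod (n + 4) → Fin 2) → Fin 2),
      FixedPts (Function.update R i R') ⊆ {fun _ => (0 : Fin 2)} := by
  constructor
  · intro a ha
    by_contra hcard
    push_neg at hcard
    have hle : (Finset.univ.filter fun i => R i a ≠ a i).card ≤ 1 := by omega
    rw [Finset.card_le_one] at hle
    set s := Finset.univ.filter fun i => R i a ≠ a i with hs
    have hj' : ∃ j : ZMod (n + 4), ∀ i, i ≠ j → i ∉ s := by
      by_cases hne : s.Nonempty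
      · obtain ⟨j, hj⟩ := hne
        exact ⟨j, fun i hi hmem => hi (hle i hmem j hj)⟩
      · exact ⟨0, fun i _ hmem => hne ⟨i, hmem⟩⟩
    obtain ⟨j, hj⟩ := hj'
    apply ha
    apply stmt5_key n a j
    intro i hi
    have := hj i hi
    rw [hs, Finset.mem_filter] at this
    push_neg at this
    rw [← this (Finset.mem_univ i), hR]
  · intro i R' a ha
    have H : ∀ k, k ≠ i → a k = if a (k - 1) = 0 ∧ a (k + 1) ≠ 0 then 1 else 0 := by
      intro k hk
      have := ha k
      rw [Function.update_of_ne hk, hR] at this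
      exact this.symm
    exact stmt5_key n a i H
end

section
/- Consider 3 players labeled 0,1,2, each with action set containing {0,1,2}, and define reaction functions R_i by R_i(0,0) = 0 and, for a_{-i} ≠ (0,0), R_i(a_{-i}) = (i − Σ_{j≠i} a_j) mod 3. Then (0,0,0) is a fixed point of R, and for every action profile a ≠ (0,0,0) with entries in {0,1,2}, at most one player i satisfies R_i(a_{-i}) = a_i. Consequently, for every player i and every alternative reaction function R'_i, the fixed-point set of (R'_i, R_{-i}) is contained in {(0,0,0)}. -/
private def f6 (i : Fin 3) (a : Fin 3 → ZMod 3) : ZMod 3 :=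
  if ∀ j, j ≠ i → a j = 0 then 0
    else ((i : ℕ) : ZMod 3) - ∑ j ∈ Finset.univ.erase i, a j

private lemma f6_key : ∀ a : Fin 3 → ZMod 3, a ≠ (fun _ => 0) →
    (Finset.univ.filter fun i => f6 i a = a i).card ≤ 1 := by decide

/-- three players with reactions `R_i(0,0) = 0` and otherwise
`R_i(a_{-i}) = (i - Σ_{j≠i} a_j) mod 3`: the all-zero profile is a fixed point,
every other profile makes at most one player happy, and every unilateral
deviation has fixed-point set contained in the all-zero outcome. -/
theorem stmt6 (R : ∀ _ : Fin 3, (Fin 3 → ZMod 3) → ZMod 3)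
    (hR : ∀ (i : Fin 3) (a : Fin 3 → ZMod 3),
      R i a = if ∀ j, j ≠ i → a j = 0 then 0
        else ((i : ℕ) : ZMod 3) - ∑ j ∈ Finset.univ.erase i, a j) :
    ((fun _ => (0 : ZMod 3)) ∈ FixedPts R) ∧
    (∀ a : Fin 3 → ZMod 3, a ≠ (fun _ => 0) →
      (Finset.univ.filter fun i => R i a = a i).card ≤ 1) ∧
    ∀ (i : Fin 3) (R' : (Fin 3 → ZMod 3) → ZMod 3),
      FixedPts (Function.update R i R') ⊆ {fun _ => (0 : ZMod 3)} := by
  have hRe : R = f6 := by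
    funext i a; rw [hR]; rfl
  subst hRe
  refine ⟨?_, f6_key, ?_⟩
  · intro i; simp [f6]
  · intro i R' a ha
    by_contra hne
    have hne' : a ≠ (fun _ => 0) := hne
    have hcard := f6_key a hne'
    have hsub : Finset.univ.erase i ⊆ Finset.univ.filter fun j => f6 j a = a j := by
      intro j hj
      rw [Finset.mem_erase] at hj
      rw [Finset.mem_filter]
      have := ha j
      rw [Function.update_of_ne hj.1] at this
      exact ⟨Finset.mem_univ _, this⟩
    have h2 : (Finset.univ.erase i).card = 2 := by
      rw [Finset.card_erase_of_mem (Finset.mem_univ _)]; rfl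
    have := Finset.card_le_card hsub
    omega
end

section
/- In a three-player game where each player has exactly two actions {0,1} and where the outcome (1,1,1) gives every player strictly lower payoff than every other outcome, the outcome (1,1,1) cannot be supported in reaction-function equilibrium. -/
private lemma fin2a (x : Fin 2) (h : ¬ x = 1) : x = 0 := by omega
private lemma fin2b (x : Fin 2) (h : ¬ x = 0) : x = 1 := by omega

private lemma fin3_cases {R : ∀ _ : Fin 3, (Fin 3 → Fin 2) → Fin 2} {v : Fin 3 → Fin 2}
    {j : Fin 3} (hf : R j v ≠ v j) :
    (j = 0 ∧ R 0 v ≠ v 0) ∨ (j = 1 ∧ R 1 v ≠ v 1) ∨ (j = 2 ∧ R 2 v ≠ v 2) := by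
  fin_cases j
  · exact Or.inl ⟨rfl, hf⟩
  · exact Or.inr (Or.inl ⟨rfl, hf⟩)
  · exact Or.inr (Or.inr ⟨rfl, hf⟩)

/-- three players with two actions `{0,1}` each; if the outcome
`(1,1,1)` is strictly worse than every other outcome for every player, then
`(1,1,1)` cannot be supported in reaction-function equilibrium. -/
theorem stmt7 (u : ∀ _ : Fin 3, (Fin 3 → Fin 2) → ℝ)
    (hworst : ∀ (i : Fin 3) (a : Fin 3 → Fin 2),
      a ≠ (fun _ => 1) → u i (fun _ => 1) < u i a) :
    ¬ SupportedOutcome u (fun _ => (1 : Fin 2)) := by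
  rintro ⟨R, hind, ⟨-, hdev⟩, hfix, hpar⟩
  -- the only fixed point is (1,1,1)
  have huniq : ∀ b ∈ FixedPts R, b = fun _ => (1 : Fin 2) := by
    intro b hb
    by_contra hne
    exact absurd (hpar b hb 0) (not_le.2 (hworst 0 b hne))
  have hUpay : ∀ i, Upay u R i = ((u i fun _ => 1 : ℝ) : EReal) := by
    intro i
    have hset : FixedPts R = {fun _ => (1 : Fin 2)} :=
      Set.eq_singleton_iff_unique_mem.2 ⟨hfix, huniq⟩
    rw [Upay, hset, Set.image_singleton, sSup_singleton]
  -- key lemma: for every non-(1,1,1) outcome b, and every i, some coordinate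
  -- other than i fails to be a "fixed" coordinate of b.
  have key : ∀ b : Fin 3 → Fin 2, b ≠ (fun _ => 1) → ∀ i, ∃ j, j ≠ i ∧ R j b ≠ b j := by
    intro b hb i
    by_contra h
    push_neg at h
    have hRib : R i b ≠ b i := by
      intro hi
      apply hb (huniq b ?_)
      intro j
      by_cases hj : j = i
      · subst hj; exact hi
      · exact h j hj
    set R' : (Fin 3 → Fin 2) → Fin 2 := fun _ => b i with hR'
    have hind' : IndepOf i R' := fun _ _ _ => rfl
    have hbfix : b ∈ FixedPts (Function.update R i R') := by
      intro j
      by_cases hj : j = i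
      · subst hj; simp [hR']
      · rw [Function.update_of_ne hj]; exact h j hj
    have hle : ((u i b : ℝ) : EReal) ≤ Upay u (Function.update R i R') i :=
      le_sSup ⟨b, hbfix, rfl⟩
    have h2 := (hle.trans (hdev i R' hind')).trans_eq (hUpay i)
    exact absurd (EReal.coe_le_coe_iff.1 h2) (not_le.2 (hworst i b hb))
  -- Combinatorial part.
  -- neighbours of (1,1,1): IndepOf forces R to push them back
  have hR0b0 : R 0 ![0,1,1] = 1 := by
    have := hind 0 ![0,1,1] (fun _ => 1) (by decide)
    rw [this, hfix 0]
  have hR1b1 : R 1 ![1,0,1] = 1 := by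
    have := hind 1 ![1,0,1] (fun _ => 1) (by decide)
    rw [this, hfix 1]
  have hR2b2 : R 2 ![1,1,0] = 1 := by
    have := hind 2 ![1,1,0] (fun _ => 1) (by decide)
    rw [this, hfix 2]
  -- b0 = (0,1,1) must have a second failing coordinate
  obtain ⟨j, hj0, hjfail⟩ := key ![0,1,1] (by decide) 0
  have hjcase : R 1 ![0,1,1] = 0 ∨ R 2 ![0,1,1] = 0 := by
    rcases fin3_cases hjfail with ⟨hje, -⟩ | ⟨-, h⟩ | ⟨-, h⟩
    · exact absurd hje hj0
    · left; simp at h; first | exact fin2a _ h | exact fin2b _ h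
    · right; simp at h; first | exact fin2a _ h | exact fin2b _ h
  rcases hjcase with hcase | hcase
  · -- Case A : R 1 (0,1,1) = 0
    -- c = (0,0,1)
    have hR1c : R 1 ![0,0,1] = 0 := by
      have := hind 1 ![0,0,1] ![0,1,1] (by decide); rw [this, hcase]
    have hR2c : R 2 ![0,0,1] = 0 := by
      obtain ⟨j, hj, hf⟩ := key ![0,0,1] (by decide) 0
      rcases fin3_cases hf with ⟨hje, -⟩ | ⟨-, h⟩ | ⟨-, h⟩
      · exact absurd hje hj
      · simp [hR1c] at h
      · simp at h; first | exact fin2a _ h | exact fin2b _ h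
    have hR0c : R 0 ![0,0,1] = 1 := by
      obtain ⟨j, hj, hf⟩ := key ![0,0,1] (by decide) 2
      rcases fin3_cases hf with ⟨-, h⟩ | ⟨-, h⟩ | ⟨hje, -⟩
      · simp at h; first | exact fin2a _ h | exact fin2b _ h
      · simp [hR1c] at h
      · exact absurd hje hj
    -- b1 = (1,0,1) : coordinate 0 is fixed, so coordinate 2 fails
    have hR0b1 : R 0 ![1,0,1] = 1 := by
      have := hind 0 ![1,0,1] ![0,0,1] (by decide); rw [this, hR0c]
    have hR2b1 : R 2 ![1,0,1] = 0 := by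
      obtain ⟨j, hj, hf⟩ := key ![1,0,1] (by decide) 1
      rcases fin3_cases hf with ⟨-, h⟩ | ⟨hje, -⟩ | ⟨-, h⟩
      · simp [hR0b1] at h
      · exact absurd hje hj
      · simp at h; first | exact fin2a _ h | exact fin2b _ h
    -- d = (1,0,0) : coordinate 2 is fixed
    have hR2d : R 2 ![1,0,0] = 0 := by
      have := hind 2 ![1,0,0] ![1,0,1] (by decide); rw [this, hR2b1]
    have hR0d : R 0 ![1,0,0] = 0 := by
      obtain ⟨j, hj, hf⟩ := key ![1,0,0] (by decide) 1
      rcases fin3_cases hf with ⟨-, h⟩ | ⟨hje, -⟩ | ⟨-, h⟩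
      · simp at h; first | exact fin2a _ h | exact fin2b _ h
      · exact absurd hje hj
      · simp [hR2d] at h
    -- e = (0,0,0) : coordinate 2 is fixed
    have hR2e : R 2 ![0,0,0] = 0 := by
      have := hind 2 ![0,0,0] ![0,0,1] (by decide); rw [this, hR2c]
    have hR0e : R 0 ![0,0,0] = 1 := by
      obtain ⟨j, hj, hf⟩ := key ![0,0,0] (by decide) 1
      rcases fin3_cases hf with ⟨-, h⟩ | ⟨hje, -⟩ | ⟨-, h⟩
      · simp at h; first | exact fin2a _ h | exact fin2b _ h
      · exact absurd hje hj
      · simp [hR2e] at h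
    have : R 0 ![1,0,0] = R 0 ![0,0,0] := hind 0 ![1,0,0] ![0,0,0] (by decide)
    rw [hR0d, hR0e] at this
    exact absurd this (by decide)
  · -- Case B : R 2 (0,1,1) = 0
    -- c = (0,1,0)
    have hR2c : R 2 ![0,1,0] = 0 := by
      have := hind 2 ![0,1,0] ![0,1,1] (by decide); rw [this, hcase]
    have hR1c : R 1 ![0,1,0] = 0 := by
      obtain ⟨j, hj, hf⟩ := key ![0,1,0] (by decide) 0
      rcases fin3_cases hf with ⟨hje, -⟩ | ⟨-, h⟩ | ⟨-, h⟩
      · exact absurd hje hj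
      · simp at h; first | exact fin2a _ h | exact fin2b _ h
      · simp [hR2c] at h
    have hR0c : R 0 ![0,1,0] = 1 := by
      obtain ⟨j, hj, hf⟩ := key ![0,1,0] (by decide) 1
      rcases fin3_cases hf with ⟨-, h⟩ | ⟨hje, -⟩ | ⟨-, h⟩
      · simp at h; first | exact fin2a _ h | exact fin2b _ h
      · exact absurd hje hj
      · simp [hR2c] at h
    -- b2 = (1,1,0) : coordinate 0 is fixed, so coordinate 1 fails
    have hR0b2 : R 0 ![1,1,0] = 1 := by
      have := hind 0 ![1,1,0] ![0,1,0] (by decide); rw [this, hR0c]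
    have hR1b2 : R 1 ![1,1,0] = 0 := by
      obtain ⟨j, hj, hf⟩ := key ![1,1,0] (by decide) 2
      rcases fin3_cases hf with ⟨-, h⟩ | ⟨-, h⟩ | ⟨hje, -⟩
      · simp [hR0b2] at h
      · simp at h; first | exact fin2a _ h | exact fin2b _ h
      · exact absurd hje hj
    -- d = (1,0,0) : coordinate 1 is fixed
    have hR1d : R 1 ![1,0,0] = 0 := by
      have := hind 1 ![1,0,0] ![1,1,0] (by decide); rw [this, hR1b2]
    have hR0d : R 0 ![1,0,0] = 0 := by
      obtain ⟨j, hj, hf⟩ := key ![1,0,0] (by decide) 2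
      rcases fin3_cases hf with ⟨-, h⟩ | ⟨-, h⟩ | ⟨hje, -⟩
      · simp at h; first | exact fin2a _ h | exact fin2b _ h
      · simp [hR1d] at h
      · exact absurd hje hj
    -- e = (0,0,0) : coordinate 1 is fixed
    have hR1e : R 1 ![0,0,0] = 0 := by
      have := hind 1 ![0,0,0] ![0,1,0] (by decide); rw [this, hR1c]
    have hR0e : R 0 ![0,0,0] = 1 := by
      obtain ⟨j, hj, hf⟩ := key ![0,0,0] (by decide) 2
      rcases fin3_cases hf with ⟨-, h⟩ | ⟨-, h⟩ | ⟨hje, -⟩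
      · simp at h; first | exact fin2a _ h | exact fin2b _ h
      · simp [hR1e] at h
      · exact absurd hje hj
    have : R 0 ![1,0,0] = R 0 ![0,0,0] := hind 0 ![1,0,0] ![0,0,0] (by decide)
    rw [hR0d, hR0e] at this
    exact absurd this (by decide)
end

section
/- In a reaction-function game, if there exists a safe reaction-function equilibrium, then there exists a Pareto-efficient safe reaction-function equilibrium: whenever a safe reaction-function equilibrium R supports outcome â and a* Pareto-dominates â (u_i(a*) ≥ u_i(â) for all i), the profile R* obtained from R by redefining R*_i(a*_{-i}) = a*_i for each i is again a safe reaction-function equilibrium supporting a*. -/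
/-- if a safe reaction-function equilibrium `R` supports `â` and `a*`
Pareto-dominates `â`, then the profile `R*` obtained from `R` by redefining each
player's reaction at `a*_{-i}` to `a*_i` is a safe reaction-function equilibrium
supporting `a*`. -/
theorem stmt9 {ι : Type*} [Fintype ι] [DecidableEq ι] {A : ι → Type*}
    [∀ j, Fintype (A j)] [∀ j, Nonempty (A j)]
    (u : ∀ i : ι, (∀ j, A j) → ℝ)
    (R : ∀ i, (∀ j, A j) → A i)
    (hind : ∀ i, IndepOf i (R i)) (hsafe : ∀ i, SafeRF u i (R i)) (hrfe : IsRFE u R)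
    (ahat : ∀ j, A j) (hhat : ahat ∈ FixedPts R)
    (hsupp : ∀ a' ∈ FixedPts R, ∀ i, u i a' ≤ u i ahat)
    (astar : ∀ j, A j) (hpar : ∀ i, u i ahat ≤ u i astar)
    (Rstar : ∀ i, (∀ j, A j) → A i)
    (hRstar : ∀ (i : ι) (a : ∀ j, A j),
      ((∀ j, j ≠ i → a j = astar j) → Rstar i a = astar i) ∧
      (¬ (∀ j, j ≠ i → a j = astar j) → Rstar i a = R i a)) :
    (∀ i, SafeRF u i (Rstar i)) ∧ IsRFE u Rstar ∧ astar ∈ FixedPts Rstar ∧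
      ∀ a' ∈ FixedPts Rstar, ∀ i, u i a' ≤ u i astar := by
  have hmm : ∀ i, maxmin u i ≤ u i ahat := by
    intro i
    have := hsafe i ahat
    rwa [hhat i, Function.update_eq_self] at this
  have hfix_star : astar ∈ FixedPts Rstar := fun i => (hRstar i astar).1 (fun j _ => rfl)
  have hchar : ∀ a ∈ FixedPts Rstar, a = astar ∨ a ∈ FixedPts R := by
    intro a ha
    by_cases h : a = astar
    · exact Or.inl h
    · right
      intro i
      by_cases hag : ∀ j, j ≠ i → a j = astar j
      · exfalso
        apply h
        funext j
        by_cases hj : j = i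
        · subst hj
          have hfi := ha j
          rw [(hRstar j a).1 hag] at hfi
          exact hfi.symm
        · exact hag j hj
      · rw [← (hRstar i a).2 hag]
        exact ha i
  have hdom : ∀ a' ∈ FixedPts Rstar, ∀ i, u i a' ≤ u i astar := by
    intro a' ha' i
    rcases hchar a' ha' with h | h
    · rw [h]
    · exact le_trans (hsupp a' h i) (hpar i)
  have hsafe' : ∀ i, SafeRF u i (Rstar i) := by
    intro i a
    by_cases hag : ∀ j, j ≠ i → a j = astar j
    · rw [(hRstar i a).1 hag]
      have hupd : Function.update a i (astar i) = astar := by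
        funext j
        by_cases hj : j = i
        · subst hj; simp
        · rw [Function.update_of_ne hj]; exact hag j hj
      rw [hupd]
      exact le_trans (hmm i) (hpar i)
    · rw [(hRstar i a).2 hag]
      exact hsafe i a
  have hUpay : ∀ (S : ∀ i, (∀ j, A j) → A i) (a0 : ∀ j, A j), a0 ∈ FixedPts S →
      (∀ a ∈ FixedPts S, ∀ i, u i a ≤ u i a0) → ∀ i, Upay u S i = ((u i a0 : ℝ) : EReal) := by
    intro S a0 h0 hmax i
    apply le_antisymm
    · apply sSup_le
      rintro x ⟨a, ha, rfl⟩
      exact EReal.coe_le_coe_iff.mpr (hmax a ha i)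
    · exact le_sSup ⟨a0, h0, rfl⟩
  refine ⟨hsafe', ⟨⟨astar, hfix_star, hdom⟩, ?_⟩, hfix_star, hdom⟩
  intro i R' hR'
  rw [hUpay Rstar astar hfix_star hdom i]
  apply sSup_le
  rintro x ⟨a, ha, rfl⟩
  by_cases h : a = astar
  · exact EReal.coe_le_coe_iff.mpr (le_of_eq (by rw [h]))
  · have hfixR' : a ∈ FixedPts (Function.update R i R') := by
      intro j
      by_cases hj : j = i
      · subst hj
        have hai := ha j
        simpa using hai
      · rw [Function.update_of_ne hj]
        have haj := ha j
        rw [Function.update_of_ne hj] at haj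
        by_cases hag : ∀ k, k ≠ j → a k = astar k
        · exfalso
          apply h
          funext k
          by_cases hk : k = j
          · subst hk; rw [← haj, (hRstar k a).1 hag]
          · exact hag k hk
        · rw [← (hRstar j a).2 hag]
          exact haj
    calc ((u i a : ℝ) : EReal) ≤ Upay u (Function.update R i R') i :=
          le_sSup ⟨a, hfixR', rfl⟩
      _ ≤ Upay u R i := hrfe.2 i R' hR'
      _ = ((u i ahat : ℝ) : EReal) := hUpay R ahat hhat hsupp i
      _ ≤ ((u i astar : ℝ) : EReal) := EReal.coe_le_coe_iff.mpr (hpar i)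
end

section
/- In any game where both players have maxmin payoff equal to 1 and the payoff matrix is: u(x,x)=(1,1), u(x,y)=(1,0), u(x,z)=(1,3), u(y,x)=(0,1), u(y,y)=(2,2), u(y,z)=(0,1), u(z,x)=(3,1), u(z,y)=(1,0), u(z,z)=(0,0), there is no safe reaction-function equilibrium. -/
private lemma aux_fin2 : ∀ i j : Fin 2, j ≠ i → 1 - j = i := by decide

private lemma aux_row2 : ∀ r : Fin 3,
    (1 : ℝ) ≤ ![![(1 : ℝ), 1, 1], ![0, 2, 0], ![3, 1, 0]] r 2 → r = 0 := by
  intro r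
  fin_cases r <;>
    norm_num [Matrix.cons_val_zero, Matrix.cons_val_one, Matrix.head_cons,
      Matrix.vecHead, Matrix.vecTail, Matrix.cons_val_two, Matrix.tail_cons]

private lemma aux_no33 : ∀ p q : Fin 3,
    (3 : ℝ) ≤ ![![(1 : ℝ), 1, 1], ![0, 2, 0], ![3, 1, 0]] p q →
    (3 : ℝ) ≤ ![![(1 : ℝ), 1, 1], ![0, 2, 0], ![3, 1, 0]] q p → False := by
  intro p q
  fin_cases p <;> fin_cases q <;>
    norm_num [Matrix.cons_val_zero, Matrix.cons_val_one, Matrix.head_cons,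
      Matrix.vecHead, Matrix.vecTail]

/-- the concrete symmetric 3×3 game (actions x=0, y=1, z=2) with
payoff matrix rows (1,1,1), (0,2,0), (3,1,0) from each player's own perspective
(both players have maxmin payoff 1) admits no safe reaction-function equilibrium. -/
theorem stmt10 (u : ∀ _ : Fin 2, (Fin 2 → Fin 3) → ℝ)
    (hu : ∀ (i : Fin 2) (a : Fin 2 → Fin 3),
      u i a = ![![(1 : ℝ), 1, 1], ![0, 2, 0], ![3, 1, 0]] (a i) (a (1 - i)))
    (hmm : ∀ i, maxmin u i = 1) :
    ¬ ∃ R : ∀ _ : Fin 2, (Fin 2 → Fin 3) → Fin 3,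
      (∀ i, IndepOf i (R i)) ∧ (∀ i, SafeRF u i (R i)) ∧ IsRFE u R := by
  rintro ⟨R, hInd, hSafe, ⟨⟨astar, hafix, hadom⟩, hdev⟩⟩
  have hne : ∀ i : Fin 2, (1 - i) ≠ i := by decide
  have hz : ∀ (i : Fin 2) (a : Fin 2 → Fin 3), a (1 - i) = 2 → R i a = 0 := by
    intro i a ha
    have h := hSafe i a
    rw [hmm i, hu] at h
    rw [Function.update_self, Function.update_of_ne (hne i), ha] at h
    exact aux_row2 _ h
  have key : ∀ i : Fin 2, (3 : ℝ) ≤ u i astar := by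
    intro i
    set R' : (Fin 2 → Fin 3) → Fin 3 := fun _ => 2 with hR'
    have hind : IndepOf i R' := fun a b _ => rfl
    set b : Fin 2 → Fin 3 := fun j => if j = i then 2 else 0 with hb
    have hbi : b i = 2 := by simp [hb]
    have hbo : b (1 - i) = 0 := by simp [hb, hne i]
    have hbfix : b ∈ FixedPts (Function.update R i R') := by
      intro j
      by_cases hj : j = i
      · subst hj; simp [Function.update_self, hb, R']
      · rw [Function.update_of_ne hj]
        have hj' : (1 : Fin 2) - j = i := aux_fin2 i j hj
        have h2 : b (1 - j) = 2 := by rw [hj', hbi]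
        rw [hz j b h2]
        simp [hb, hj]
    have hub : u i b = 3 := by
      rw [hu, hbi, hbo]; norm_num; rfl
    have h3 : ((3 : ℝ) : EReal) ≤ Upay u (Function.update R i R') i := by
      apply le_sSup
      exact ⟨b, hbfix, by simp [hub]⟩
    have h4 := hdev i R' hind
    have h5 : Upay u R i ≤ ((u i astar : ℝ) : EReal) := by
      apply sSup_le
      rintro x ⟨a', ha', rfl⟩
      exact EReal.coe_le_coe_iff.mpr (hadom a' ha' i)
    exact EReal.coe_le_coe_iff.mp (le_trans h3 (le_trans h4 h5))
  have k0 := key 0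
  have k1 := key 1
  rw [hu, show (1 : Fin 2) - 0 = 1 from rfl] at k0
  rw [hu, show (1 : Fin 2) - 1 = 0 from rfl] at k1
  exact aux_no33 (astar 0) (astar 1) k0 k1
end

section
/- In a game where all n players use the same monotone symmetric reaction function, every fixed point is coordinated: if a is a fixed point of the profile R with R_i ≅ R_j monotone for all i, j, then a_i = a_j for all players i, j. -/
/-- Conditional collaboration: coordinate if the others coordinate (at a positive
level), and otherwise react at least at the others' minimum but strictly below
their maximum investment. -/
def CondCollab {ι : Type*} {H : ℕ} (i : ι) (r : (ι → Fin (H + 1)) → Fin (H + 1)) : Prop :=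
  (∀ α : Fin (H + 1), α ≠ 0 → ∀ a : ι → Fin (H + 1), (∀ j, j ≠ i → a j = α) → r a = α) ∧
  (∀ a : ι → Fin (H + 1), (∃ j k, j ≠ i ∧ k ≠ i ∧ a j ≠ a k) →
    (∃ j, j ≠ i ∧ a j ≤ r a) ∧ (∃ j, j ≠ i ∧ r a < a j))

/-- Payoff consistency: the reaction is the same across payoff-equivalent
action profiles of the others. -/
def PayoffConsistent {ι : Type*} [DecidableEq ι] {H : ℕ}
    (u : ι → (ι → Fin (H + 1)) → ℝ) (i : ι) (r : (ι → Fin (H + 1)) → Fin (H + 1)) : Prop :=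
  ∀ a a' : ι → Fin (H + 1),
    (∀ x : Fin (H + 1), u i (Function.update a i x) = u i (Function.update a' i x)) →
    r a = r a'

/-- A symmetric reaction function: invariant under permutations of the other players. -/
def SymmRF {ι : Type*} {H : ℕ} (i : ι) (r : (ι → Fin (H + 1)) → Fin (H + 1)) : Prop :=
  ∀ σ : Equiv.Perm ι, σ i = i → ∀ a : ι → Fin (H + 1), r (fun k => a (σ k)) = r a

/-- A norm: a profile in which all players play the same symmetric, monotone
reaction function. -/
def IsNorm {ι : Type*} [DecidableEq ι] {H : ℕ} (R : ∀ _ : ι, (ι → Fin (H + 1)) → Fin (H + 1)) : Prop :=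
  (∀ i, IndepOf i (R i)) ∧ (∀ i, Monotone (R i)) ∧ (∀ i, SymmRF i (R i)) ∧
  (∀ (i j : ι) (a : ι → Fin (H + 1)), R j (fun k => a (Equiv.swap i j k)) = R i a)

/-- Norm-proofness: playing `r` against any norm yields at least the payoff of
conforming to the norm. -/
noncomputable def NormProof {ι : Type*} [DecidableEq ι] {H : ℕ}
    (u : ι → (ι → Fin (H + 1)) → ℝ) (i : ι) (r : (ι → Fin (H + 1)) → Fin (H + 1)) : Prop :=
  ∀ R : ∀ _ : ι, (ι → Fin (H + 1)) → Fin (H + 1), IsNorm R →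
    Upay u R i ≤ Upay u (Function.update R i r) i

/-- if all players use the same monotone symmetric reaction
function, then every fixed point is coordinated. -/
theorem stmt12 {ι : Type*} [Fintype ι] [DecidableEq ι] {H : ℕ}
    (R : ∀ _ : ι, (ι → Fin (H + 1)) → Fin (H + 1))
    (hind : ∀ i, IndepOf i (R i)) (hmono : ∀ i, Monotone (R i))
    (hsym : ∀ i, SymmRF i (R i))
    (hsame : ∀ (i j : ι) (a : ι → Fin (H + 1)), R j (fun k => a (Equiv.swap i j k)) = R i a)
    (a : ι → Fin (H + 1)) (ha : a ∈ FixedPts R) :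
    ∀ i j, a i = a j := by
  intro i j
  have : Nonempty ι := ⟨i⟩
  obtain ⟨i0, hi0⟩ := Finite.exists_max a
  obtain ⟨j0, hj0⟩ := Finite.exists_min a
  set b : ι → Fin (H + 1) := fun k => a (Equiv.swap i0 j0 k) with hb
  have h1 : R j0 b = a i0 := by
    rw [hb, hsame i0 j0 a]; exact ha i0
  have h2 : R j0 b = R j0 (Function.update b j0 (a j0)) :=
    hind j0 b _ (fun k hk => (Function.update_of_ne hk _ _).symm)
  have h3 : Function.update b j0 (a j0) ≤ a := by
    intro k
    by_cases hk : k = j0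
    · subst hk; simp [hj0 k]
    · rw [Function.update_of_ne hk]
      by_cases hk2 : k = i0
      · subst hk2; simp [hb, Equiv.swap_apply_left]; exact hi0 j0
      · simp [hb, Equiv.swap_apply_of_ne_of_ne hk2 hk]
  have key : a i0 ≤ a j0 := by
    calc a i0 = R j0 (Function.update b j0 (a j0)) := by rw [← h2, h1]
    _ ≤ R j0 a := hmono j0 h3
    _ = a j0 := ha j0
  exact le_antisymm (le_trans (hi0 i) (le_trans key (hj0 j)))
    (le_trans (hi0 j) (le_trans key (hj0 i)))
end

section
/- In a high-risk weakest-link game (1 < λ < H/(H−1)), the best-reply reaction BR_i(a_{-i}) = min_{j≠i} a_j is weakly dominant against monotone play: for every reaction function R'_i and every profile R_{-i} of monotone reaction functions of the other players, U_i(BR_i, R_{-i}) ≥ U_i(R'_i, R_{-i}). -/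
lemma exists_fixed_ge' {α : Type*} [PartialOrder α] [Finite α] {F : α → α}
    (hF : Monotone F) {x : α} (hx : x ≤ F x) : ∃ b, F b = b ∧ x ≤ b := by
  have hmono : Monotone fun k => F^[k] x := by
    apply monotone_nat_of_le_succ
    intro n
    induction n with
    | zero => simpa using hx
    | succ n ih =>
      rw [Function.iterate_succ_apply', Function.iterate_succ_apply']
      exact hF ih
  obtain ⟨m, n, hmn, heq⟩ := Finite.exists_ne_map_eq_of_infinite fun k => F^[k] x
  rcases hmn.lt_or_gt with h | h
  · refine ⟨F^[m] x, ?_, hmono (Nat.zero_le m)⟩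
    have h1 : F^[m] x ≤ F^[m+1] x := hmono (Nat.le_succ m)
    have h2 : F^[m+1] x ≤ F^[n] x := hmono h
    have : F^[m+1] x = F^[m] x := le_antisymm (heq ▸ h2) h1
    rwa [Function.iterate_succ_apply'] at this
  · refine ⟨F^[n] x, ?_, hmono (Nat.zero_le n)⟩
    have h1 : F^[n] x ≤ F^[n+1] x := hmono (Nat.le_succ n)
    have h2 : F^[n+1] x ≤ F^[m] x := hmono h
    have : F^[n+1] x = F^[n] x := le_antisymm (heq ▸ h2) h1
    rwa [Function.iterate_succ_apply'] at this

lemma exists_fixed_le' {α : Type*} [PartialOrder α] [Finite α] {F : α → α}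
    (hF : Monotone F) {x : α} (hx : F x ≤ x) : ∃ b, F b = b ∧ b ≤ x := by
  obtain ⟨b, hb, hbx⟩ := exists_fixed_ge' (α := αᵒᵈ) hF.dual hx
  exact ⟨b, hb, hbx⟩

/-- in a high-risk weakest-link game (`1 < λ < H/(H−1)`), the
best-reply reaction (match the minimum investment of the others) is weakly
dominant against monotone play. -/
theorem stmt15 {ι : Type*} [Fintype ι] [DecidableEq ι] [Nonempty ι] {H : ℕ}
    (hι : 2 ≤ Fintype.card ι) (hH : 0 < H)
    (l : ℝ) (hl1 : 1 < l) (hl2 : l * ((H : ℝ) - 1) < (H : ℝ))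
    (u : ι → (ι → Fin (H + 1)) → ℝ)
    (hu : ∀ i a, u i a =
      l * (Finset.univ.inf' Finset.univ_nonempty fun j => ((a j : ℕ) : ℝ)) - ((a i : ℕ) : ℝ))
    (i : ι) (br : (ι → Fin (H + 1)) → Fin (H + 1))
    (hbr : ∀ a : ι → Fin (H + 1), (∀ j, j ≠ i → br a ≤ a j) ∧ (∃ j, j ≠ i ∧ br a = a j))
    (R : ∀ _ : ι, (ι → Fin (H + 1)) → Fin (H + 1))
    (hR : ∀ j, j ≠ i → IndepOf j (R j) ∧ Monotone (R j))
    (r' : (ι → Fin (H + 1)) → Fin (H + 1)) (hr' : IndepOf i r') :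
    Upay u (Function.update R i r') i ≤ Upay u (Function.update R i br) i := by
  classical
  set Pb := Function.update R i br with hPbdef
  have hbrmono : Monotone br := by
    intro x y hxy
    obtain ⟨j, hj, hje⟩ := (hbr y).2
    exact hje ▸ le_trans ((hbr x).1 j hj) (hxy j)
  set F : (ι → Fin (H + 1)) → (ι → Fin (H + 1)) := fun x j => Pb j x with hFdef
  have hFmono : Monotone F := by
    intro x y hxy j
    by_cases hj : j = i
    · subst hj
      simpa [F, Pb, Function.update_self] using hbrmono hxy
    · simpa [F, Pb, Function.update_of_ne hj] using (hR j hj).2 hxy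
  have hfixPb : ∀ b, F b = b → b ∈ FixedPts Pb := fun b hb j => congrFun hb j
  have hble : ∀ b ∈ FixedPts Pb, ∀ j, b i ≤ b j := by
    intro b hb j
    by_cases hj : j = i
    · subst hj; exact le_rfl
    · have hbi : br b = b i := by simpa [Pb, Function.update_self] using hb i
      exact hbi ▸ (hbr b).1 j hj
  have hinf : ∀ c : ι → Fin (H + 1), (∀ j, c i ≤ c j) →
      (Finset.univ.inf' Finset.univ_nonempty fun j => ((c j : ℕ) : ℝ)) = ((c i : ℕ) : ℝ) := by
    intro c hc
    refine le_antisymm (Finset.inf'_le _ (Finset.mem_univ i)) ?_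
    refine Finset.le_inf' _ _ fun j _ => ?_
    exact_mod_cast hc j
  have hbval : ∀ b ∈ FixedPts Pb, u i b = (l - 1) * ((b i : ℕ) : ℝ) := by
    intro b hb
    rw [hu, hinf b (hble b hb)]; ring
  apply sSup_le
  rintro y ⟨a, ha, rfl⟩
  have haR : ∀ j, j ≠ i → R j a = a j := by
    intro j hj
    have := ha j
    rwa [Function.update_of_ne hj] at this
  by_cases hcase : ∀ j, a i ≤ a j
  · -- i invests weakly least: climb up to a fixed point of the br-profile
    have hle : a ≤ F a := by
      intro j
      by_cases hj : j = i
      · subst hj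
        obtain ⟨k, hk, hke⟩ := (hbr a).2
        simpa [F, Pb, Function.update_self, hke] using hcase k
      · simp [F, Pb, Function.update_of_ne hj, haR j hj]
    obtain ⟨b, hbF, hab⟩ := exists_fixed_ge' hFmono hle
    have hbfix := hfixPb b hbF
    have h1 : u i a = (l - 1) * ((a i : ℕ) : ℝ) := by
      rw [hu, hinf a hcase]; ring
    have hlab : u i a ≤ u i b := by
      rw [h1, hbval b hbfix]
      have : ((a i : ℕ) : ℝ) ≤ ((b i : ℕ) : ℝ) := by exact_mod_cast hab i
      nlinarith
    exact le_trans (EReal.coe_le_coe_iff.mpr hlab) (le_sSup ⟨b, hbfix, rfl⟩)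
  · -- someone else invests strictly less: i's payoff is negative
    push_neg at hcase
    obtain ⟨k, hk⟩ := hcase
    have htop : F (fun _ => Fin.last H) ≤ fun _ => Fin.last H := fun j => Fin.le_last _
    obtain ⟨b, hbF, -⟩ := exists_fixed_le' hFmono htop
    have hbfix := hfixPb b hbF
    have hb0 : (0 : ℝ) ≤ u i b := by
      rw [hbval b hbfix]
      have : (0 : ℝ) ≤ ((b i : ℕ) : ℝ) := Nat.cast_nonneg _
      nlinarith
    have hk1 : ((a k : ℕ) : ℝ) + 1 ≤ ((a i : ℕ) : ℝ) := by
      have : (a k : ℕ) + 1 ≤ (a i : ℕ) := Nat.succ_le_of_lt (Fin.lt_def.mp hk)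
      exact_mod_cast this
    have hkH : ((a k : ℕ) : ℝ) ≤ (H : ℝ) - 1 := by
      have h1 : (a i : ℕ) ≤ H := Fin.is_le _
      have h2 : (a k : ℕ) + 1 ≤ H := le_trans hk h1
      have : ((a k : ℕ) : ℝ) + 1 ≤ (H : ℝ) := by exact_mod_cast h2
      linarith
    have hma : (Finset.univ.inf' Finset.univ_nonempty fun j => ((a j : ℕ) : ℝ)) ≤
        ((a k : ℕ) : ℝ) := Finset.inf'_le _ (Finset.mem_univ k)
    have ha0 : u i a ≤ 0 := by
      rw [hu]
      set m := Finset.univ.inf' Finset.univ_nonempty fun j => ((a j : ℕ) : ℝ) with hm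
      have hlm : l * m ≤ l * ((a k : ℕ) : ℝ) :=
        mul_le_mul_of_nonneg_left hma (by linarith)
      nlinarith
    have hlab : u i a ≤ u i b := le_trans ha0 hb0
    exact le_trans (EReal.coe_le_coe_iff.mpr hlab) (le_sSup ⟨b, hbfix, rfl⟩)
end

section
/- In a high-risk public-good game (1/n < λ < H/(nH−1)), the reaction R*_i(a_{-i}) = ⌊(Σ_{j≠i} a_j)/(n−1)⌋ is welfare-maximizing conditional on safe play: for every a_{-i}, R*_i(a_{-i}) is the largest action a_i ∈ {0,…,H} satisfying u_i(a_i, a_{-i}) ≥ 0, and hence maximizes Σ_j u_j(a_i, a_{-i}) subject to u_i(a_i, a_{-i}) ≥ 0. -/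
/-- in a high-risk public-good game (`1/n < λ < H/(nH−1)`), the
reaction `R*_i` matching the rounded-down average of the others is, at every
`a_{-i}`, the largest safe action (payoff at least the maxmin payoff 0) and hence
maximizes total welfare subject to safe play. -/
theorem stmt18 {ι : Type*} [Fintype ι] [DecidableEq ι] {H : ℕ}
    (hι : 2 ≤ Fintype.card ι) (hH : 0 < H)
    (l : ℝ) (hl1 : 1 / (Fintype.card ι : ℝ) < l)
    (hl2 : l * ((Fintype.card ι : ℝ) * (H : ℝ) - 1) < (H : ℝ))
    (u : ι → (ι → Fin (H + 1)) → ℝ)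
    (hu : ∀ i a, u i a = l * (∑ j : ι, ((a j : ℕ) : ℝ)) - ((a i : ℕ) : ℝ))
    (i : ι) (rstar : (ι → Fin (H + 1)) → Fin (H + 1))
    (hrstar : ∀ a : ι → Fin (H + 1),
      (rstar a : ℕ) = (∑ j ∈ Finset.univ.erase i, (a j : ℕ)) / (Fintype.card ι - 1)) :
    ∀ a : ι → Fin (H + 1),
      (0 ≤ u i (Function.update a i (rstar a))) ∧
      (∀ x : Fin (H + 1), 0 ≤ u i (Function.update a i x) → x ≤ rstar a) ∧
      (∀ x : Fin (H + 1), 0 ≤ u i (Function.update a i x) →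
        ∑ j : ι, u j (Function.update a i x) ≤ ∑ j : ι, u j (Function.update a i (rstar a))) := by
  intro a
  set n := Fintype.card ι with hn
  have hn2 : 2 ≤ n := hι
  have hnpos : (0:ℝ) < (n:ℝ) := by positivity
  have hl0 : 0 < l := lt_trans (by positivity) hl1
  have hln : 1 < l * n := by
    rw [div_lt_iff₀ hnpos] at hl1; linarith
  set S : ℕ := ∑ j ∈ Finset.univ.erase i, (a j : ℕ) with hS
  have hsum : ∀ x : Fin (H+1),
      ∑ j : ι, ((Function.update a i x j : ℕ) : ℝ) = (S:ℝ) + (x:ℝ) := by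
    intro x
    rw [← Finset.add_sum_erase _ _ (Finset.mem_univ i), Function.update_self]
    rw [Finset.sum_congr rfl (fun j hj => by
      rw [Function.update_of_ne (Finset.ne_of_mem_erase hj)])]
    push_cast [hS]; ring
  have hui : ∀ x : Fin (H+1),
      u i (Function.update a i x) = l * ((S:ℝ) + (x:ℝ)) - (x:ℝ) := by
    intro x
    rw [hu, hsum, Function.update_self]
  -- part 1: safety of rstar
  have hr : (rstar a : ℕ) = S / (n - 1) := hrstar a
  have hrmul : (rstar a : ℕ) * (n - 1) ≤ S := by
    rw [hr]; exact Nat.div_mul_le_self _ _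
  have hrmulR : ((rstar a : ℕ) : ℝ) * ((n:ℝ) - 1) ≤ (S:ℝ) := by
    have := hrmul
    have h1 : ((rstar a : ℕ) * (n - 1) : ℕ) ≤ (S:ℕ) := this
    calc ((rstar a : ℕ) : ℝ) * ((n:ℝ) - 1)
        = (((rstar a : ℕ) * (n - 1) : ℕ) : ℝ) := by
          push_cast [Nat.cast_sub (by omega : 1 ≤ n)]; ring
      _ ≤ (S:ℝ) := by exact_mod_cast h1
  have part1 : 0 ≤ u i (Function.update a i (rstar a)) := by
    rw [hui]
    nlinarith [Nat.cast_nonneg (α := ℝ) (rstar a : ℕ)]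
  -- part 2: maximality
  have part2 : ∀ x : Fin (H+1), 0 ≤ u i (Function.update a i x) → x ≤ rstar a := by
    intro x hx
    rw [hui] at hx
    rw [Fin.le_def]
    by_contra hcon
    push_neg at hcon
    have hxr : (rstar a : ℕ) < (x : ℕ) := hcon
    have hSlt : S < (x:ℕ) * (n - 1) := by
      by_contra hS2
      push_neg at hS2
      have : (x:ℕ) ≤ S / (n-1) := (Nat.le_div_iff_mul_le (by omega)).2 hS2
      omega
    have hx1 : 1 ≤ (x:ℕ) := by
      rcases Nat.eq_zero_or_pos (x:ℕ) with h | h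
      · rw [h] at hSlt; omega
      · exact h
    have hxH : (x:ℕ) ≤ H := Nat.lt_succ_iff.1 x.isLt
    have hSR : (S:ℝ) ≤ (x:ℝ) * ((n:ℝ) - 1) - 1 := by
      have : S + 1 ≤ (x:ℕ) * (n-1) := hSlt
      have h2 : ((S:ℕ):ℝ) + 1 ≤ (((x:ℕ) * (n-1) : ℕ) : ℝ) := by exact_mod_cast this
      rw [Nat.cast_mul, Nat.cast_sub (by omega : 1 ≤ n)] at h2
      push_cast at h2 ⊢
      linarith
    have hx1R : (1:ℝ) ≤ (x:ℝ) := by exact_mod_cast hx1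
    have hxHR : ((x:ℕ):ℝ) ≤ (H:ℝ) := by exact_mod_cast hxH
    have hHpos : (0:ℝ) < (H:ℝ) := by exact_mod_cast hH
    -- x ≤ l*(n*x - 1) from hx and hSR
    have key : (x:ℝ) ≤ l * ((n:ℝ) * (x:ℝ) - 1) := by nlinarith
    -- but l*(n*x-1) < x using hl2
    nlinarith [mul_nonneg hl0.le (sub_nonneg.2 hxHR)]
  refine ⟨part1, part2, ?_⟩
  -- part 3: welfare
  intro x hx
  have hxr : (x:ℕ) ≤ (rstar a : ℕ) := part2 x hx
  have hxrR : ((x:ℕ):ℝ) ≤ ((rstar a : ℕ):ℝ) := by exact_mod_cast hxr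
  have hwelf : ∀ y : Fin (H+1),
      ∑ j : ι, u j (Function.update a i y) = ((n:ℝ) * l - 1) * ((S:ℝ) + (y:ℝ)) := by
    intro y
    have : ∀ j : ι, u j (Function.update a i y)
        = l * ((S:ℝ) + (y:ℝ)) - ((Function.update a i y j : ℕ) : ℝ) := by
      intro j; rw [hu, hsum]
    rw [Finset.sum_congr rfl (fun j _ => this j), Finset.sum_sub_distrib, hsum,
      Finset.sum_const, Finset.card_univ, ← hn]
    push_cast; ring
  rw [hwelf, hwelf]
  have : (0:ℝ) ≤ (n:ℝ) * l - 1 := by linarith [hln]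
  nlinarith [Nat.cast_nonneg (α := ℝ) S]
end

section
/- Let a player's payoff u_i : A → ℝ on A = ∏_j {0,…,H} be non-decreasing in each a_j for j ≠ i, let BR_i be a monotone selection of best replies, and suppose for each outcome a, a_i > BR_i(a_{-i}) implies u_i(a) ≤ u_i(0,…,0). Then BR_i is weakly dominant against monotone play: for all reaction functions R'_i and all monotone profiles R_{-i} of the other players, U_i(BR_i, R_{-i}) ≥ U_i(R'_i, R_{-i}). -/
/-- In a finite partial order, a monotone map has a fixed point above any
post-fixed point. -/
lemma exists_fix_above {P : Type*} [PartialOrder P] [Finite P] (T : P → P)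
    (hT : Monotone T) (c : P) (hc : c ≤ T c) : ∃ b, T b = b ∧ c ≤ b := by
  have hmono : Monotone (fun n => T^[n] c) := by
    apply monotone_nat_of_le_succ
    intro n
    induction n with
    | zero => simpa using hc
    | succ n ih =>
      rw [Function.iterate_succ_apply', Function.iterate_succ_apply']
      exact hT ih
  have key : ∀ m n : ℕ, m < n → T^[m] c = T^[n] c → ∃ b, T b = b ∧ c ≤ b := by
    intro m n hlt heq
    refine ⟨T^[m] c, ?_, hmono (Nat.zero_le m)⟩
    have h1 : T^[m] c ≤ T^[m + 1] c := hmono (Nat.le_succ m)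
    have h2 : T^[m + 1] c ≤ T^[m] c := heq ▸ hmono hlt
    have h3 : T^[m + 1] c = T^[m] c := le_antisymm h2 h1
    rwa [Function.iterate_succ_apply'] at h3
  obtain ⟨m, n, hmn, heq⟩ := Finite.exists_ne_map_eq_of_infinite (fun n => T^[n] c)
  rcases hmn.lt_or_gt with h | h
  · exact key m n h heq
  · exact key n m h heq.symm

/-- if player `i`'s payoff is non-decreasing in the others' actions,
`br` is a monotone selection of best replies, and overshooting the best reply is
never better than the all-zero outcome, then `br` is weakly dominant against
monotone play. -/
theorem stmt19 {ι : Type*} [Fintype ι] [DecidableEq ι] {H : ℕ}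
    (u : ι → (ι → Fin (H + 1)) → ℝ) (i : ι)
    (hmono_others : ∀ (a : ι → Fin (H + 1)) (j : ι), j ≠ i →
      ∀ x : Fin (H + 1), a j ≤ x → u i a ≤ u i (Function.update a j x))
    (br : (ι → Fin (H + 1)) → Fin (H + 1))
    (hbr_ind : IndepOf i br) (hbr_mono : Monotone br)
    (hbr_best : ∀ (a : ι → Fin (H + 1)) (x : Fin (H + 1)),
      u i (Function.update a i x) ≤ u i (Function.update a i (br a)))
    (hover : ∀ a : ι → Fin (H + 1), br a < a i → u i a ≤ u i (fun _ => 0))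
    (R : ∀ _ : ι, (ι → Fin (H + 1)) → Fin (H + 1))
    (hR : ∀ j, j ≠ i → IndepOf j (R j) ∧ Monotone (R j))
    (r' : (ι → Fin (H + 1)) → Fin (H + 1)) (hr' : IndepOf i r') :
    Upay u (Function.update R i r') i ≤ Upay u (Function.update R i br) i := by
  classical
  -- monotonicity of `u i` in the others' coordinates, all at once
  have mono_aux : ∀ (s : Finset ι), i ∉ s → ∀ p q : ι → Fin (H + 1), p i = q i →
      (∀ j ∈ s, p j ≤ q j) → (∀ j, j ∉ s → p j = q j) → u i p ≤ u i q := by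
    intro s
    induction s using Finset.induction_on with
    | empty =>
      intro _ p q _ _ h
      have : p = q := funext fun j => h j (by simp)
      simp [this]
    | @insert j s hj ih =>
      intro hins p q hpq hle heq
      have hji : j ≠ i := fun h => hins (by simp [h])
      have hins' : i ∉ s := fun h => hins (Finset.mem_insert_of_mem h)
      have hstep : u i p ≤ u i (Function.update p j (q j)) :=
        hmono_others p j hji (q j) (hle j (Finset.mem_insert_self j s))
      refine hstep.trans (ih hins' (Function.update p j (q j)) q ?_ ?_ ?_)
      · simp [Function.update_of_ne hji.symm, hpq]
      · intro k hk
        by_cases hkj : k = j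
        · subst hkj; simp
        · rw [Function.update_of_ne hkj]
          exact hle k (Finset.mem_insert_of_mem hk)
      · intro k hk
        by_cases hkj : k = j
        · subst hkj; simp
        · rw [Function.update_of_ne hkj]
          exact heq k (by simp [hkj, hk])
  have mono_all : ∀ p q : ι → Fin (H + 1), p i = q i →
      (∀ j, j ≠ i → p j ≤ q j) → u i p ≤ u i q := by
    intro p q hpq hle
    refine mono_aux (Finset.univ.erase i) (by simp) p q hpq ?_ ?_
    · intro j hjmem
      exact hle j (Finset.ne_of_mem_erase hjmem)
    · intro j hj
      have : j = i := by
        by_contra hji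
        exact hj (Finset.mem_erase.mpr ⟨hji, Finset.mem_univ j⟩)
      subst this; exact hpq
  -- the monotone map whose fixed points are the fixed points of the br-profile
  set T : (ι → Fin (H + 1)) → (ι → Fin (H + 1)) :=
    fun a j => Function.update R i br j a with hT_def
  have hT_mono : Monotone T := by
    intro a b hab j
    by_cases hji : j = i
    · subst hji; simpa [hT_def] using hbr_mono hab
    · simpa [hT_def, Function.update_of_ne hji] using (hR j hji).2 hab
  have hfixT : ∀ b, T b = b → b ∈ FixedPts (Function.update R i br) := by
    intro b hb j
    exact congrFun hb j
  -- main step: every fixed point of the deviation is dominated by some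
  -- fixed point of the br-profile
  refine sSup_le_sSup_of_isCofinalFor ?_
  rintro x ⟨a, ha, rfl⟩
  have ha_other : ∀ j, j ≠ i → R j a = a j := by
    intro j hji
    have := ha j
    rwa [Function.update_of_ne hji] at this
  have ha_i : r' a = a i := by
    have := ha i
    rwa [Function.update_self] at this
  rcases le_or_gt (a i) (br a) with hcase | hcase
  · -- no overshoot: go up from `a`
    have hca : a ≤ T a := by
      intro j
      by_cases hji : j = i
      · subst hji; simpa [hT_def] using hcase
      · simp [hT_def, Function.update_of_ne hji, ha_other j hji]
    obtain ⟨b, hbfix, hab⟩ := exists_fix_above T hT_mono a hca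
    have hbi : br b = b i := by simpa [hT_def] using congrFun hbfix i
    refine ⟨(u i b : EReal), ⟨b, hfixT b hbfix, rfl⟩, ?_⟩
    have h1 : u i a ≤ u i (Function.update b i (a i)) := by
      refine mono_all a (Function.update b i (a i)) (by simp) ?_
      intro j hji
      rw [Function.update_of_ne hji]
      exact hab j
    have h2 : u i (Function.update b i (a i)) ≤ u i (Function.update b i (br b)) :=
      hbr_best b (a i)
    have h3 : Function.update b i (br b) = b := by
      rw [hbi]; exact Function.update_eq_self i b
    show ((u i a : ℝ) : EReal) ≤ ((u i b : ℝ) : EReal)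
    exact_mod_cast h1.trans (h3 ▸ h2)
  · -- overshoot: payoff at most the all-zero payoff; go up from the bottom
    have hzero : u i a ≤ u i (fun _ => 0) := hover a hcase
    have hc0 : (fun _ => (0 : Fin (H + 1))) ≤ T (fun _ => 0) := by
      intro j; exact Fin.zero_le _
    obtain ⟨b, hbfix, hab⟩ := exists_fix_above T hT_mono _ hc0
    have hbi : br b = b i := by simpa [hT_def] using congrFun hbfix i
    refine ⟨(u i b : EReal), ⟨b, hfixT b hbfix, rfl⟩, ?_⟩
    have h1 : u i (fun _ => 0) ≤ u i (Function.update b i 0) := by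
      refine mono_all (fun _ => 0) (Function.update b i 0) (by simp) ?_
      intro j hji
      rw [Function.update_of_ne hji]
      exact Fin.zero_le _
    have h2 : u i (Function.update b i 0) ≤ u i (Function.update b i (br b)) :=
      hbr_best b 0
    have h3 : Function.update b i (br b) = b := by
      rw [hbi]; exact Function.update_eq_self i b
    show ((u i a : ℝ) : EReal) ≤ ((u i b : ℝ) : EReal)
    exact_mod_cast hzero.trans (h1.trans (h3 ▸ h2))
end
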